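/- Let R be a discrete valuation ring with uniformizer π and fraction field K. Let A be a commutative R-algebra that is semireflexive as an R-module, and let B be a commutative A-algebra that is flat as an R-module and finitely generated as an A-module. If K ⊗_R B is semireflexive as a module over K ⊗_R A, then B is semireflexive as an R-module. -/

import Mathlib

/-- An `S`-module `M` is semireflexive if the canonical evaluation map from `M` to its
double dual is injective. -/
def Semireflexive (S : Type*) (M : Type*) [CommRing S] [AddCommGroup M] [Module S M] : Prop :=
  Function.Injective (Module.Dual.eval S M)

set_option maxHeartbeats 1000000 in
open TensorProduct in
/-- Let `R` be a discrete valuation ring with uniformizer `π` and fraction field `K`.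
Let `A` be a commutative `R`-algebra that is semireflexive as an `R`-module, and let `B` be
a commutative `A`-algebra that is flat as an `R`-module and finitely generated as an
`A`-module.  If `K ⊗[R] B` is semireflexive as a module over `K ⊗[R] A` (via the base change
`K ⊗[R] A → K ⊗[R] B` of `A → B`), then `B` is semireflexive as an `R`-module. -/
theorem stmt3 (R : Type*) [CommRing R] [IsDomain R] [IsDiscreteValuationRing R]
    (π : R) (hπ : Irreducible π)
    (K : Type*) [Field K] [Algebra R K] [IsFractionRing R K]
    (A : Type*) [CommRing A] [Algebra R A]
    (B : Type*) [CommRing B] [Algebra A B] [Algebra R B] [IsScalarTower R A B]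
    (hA : Semireflexive R A)
    (hBflat : Module.Flat R B)
    (hBfin : Module.Finite A B)
    (hKB : @Semireflexive (K ⊗[R] A) (K ⊗[R] B) inferInstance inferInstance
      (Module.compHom (K ⊗[R] B)
        (Algebra.TensorProduct.map (AlgHom.id R K)
          (IsScalarTower.toAlgHom R A B)).toRingHom)) :
    Semireflexive R B := by
  classical
  letI instKB : Module (K ⊗[R] A) (K ⊗[R] B) :=
    Module.compHom (K ⊗[R] B)
      (Algebra.TensorProduct.map (AlgHom.id R K) (IsScalarTower.toAlgHom R A B)).toRingHom
  set g : K ⊗[R] A →ₐ[R] K ⊗[R] B :=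
    Algebra.TensorProduct.map (AlgHom.id R K) (IsScalarTower.toAlgHom R A B) with hg
  have hsmul : ∀ (x : K ⊗[R] A) (y : K ⊗[R] B), x • y = g x * y := fun _ _ => rfl
  set S₀ := nonZeroDivisors R with hS₀
  set fA : A →ₗ[R] K ⊗[R] A := TensorProduct.mk R K A 1 with hfAdef
  set fB : B →ₗ[R] K ⊗[R] B := TensorProduct.mk R K B 1 with hfBdef
  haveI hlocA : IsLocalizedModule S₀ fA :=
    (isLocalizedModule_iff_isBaseChange S₀ K fA).mpr (TensorProduct.isBaseChange R A K)
  -- scalar multiplication by nonzerodivisors of R is injective on K ⊗ A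
  have hsreg : ∀ (s : S₀) (x : K ⊗[R] A), (s : R) • x = 0 → x = 0 := by
    intro s x hx
    have h1 : algebraMap R K (s : R) ≠ 0 := fun h =>
      nonZeroDivisors.ne_zero s.2 ((IsFractionRing.injective R K) (by simpa using h))
    have h2 : (algebraMap R K (s : R)) • x = 0 := by rwa [algebraMap_smul]
    rcases smul_eq_zero.mp h2 with h | h
    · exact absurd h h1
    · exact h
  -- fA is injective
  have hfA : Function.Injective fA := by
    rw [← LinearMap.ker_eq_bot, LinearMap.ker_eq_bot']
    intro a ha
    obtain ⟨s, hs⟩ := (IsLocalizedModule.eq_zero_iff S₀ fA).mp ha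
    apply hA
    rw [map_zero]
    ext gfun
    have h3 : (s : R) * gfun a = 0 := by
      rw [← smul_eq_mul, ← map_smul, ← Submonoid.smul_def, hs, map_zero]
    simpa [mul_eq_zero, nonZeroDivisors.ne_zero s.2] using h3
  -- fB is injective
  have hfB : Function.Injective fB := by
    haveI := hBflat
    have h1 : Function.Injective (Algebra.linearMap R K) := IsFractionRing.injective R K
    have h2 := Module.Flat.rTensor_preserves_injective_linearMap (M := B)
      (Algebra.linearMap R K) h1
    intro x y hxy
    have hx : ∀ z : B, fB z =
        LinearMap.rTensor B (Algebra.linearMap R K) ((TensorProduct.lid R B).symm z) := by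
      intro z
      simp [hfBdef]
    rw [hx x, hx y] at hxy
    exact (TensorProduct.lid R B).symm.injective (h2 hxy)
  -- main argument
  have key : ∀ b : B, Module.Dual.eval R B b = 0 → b = 0 := by
    intro b hb0
    have hb : ∀ f : B →ₗ[R] R, f b = 0 := fun f => by
      have := DFunLike.congr_fun hb0 f
      simpa using this
    -- reduce to showing fB b = 0
    suffices hz : fB b = 0 by
      apply hfB
      rw [hz, map_zero]
    -- use hKB : enough that all functionals kill fB b
    suffices hall : ∀ φ : (K ⊗[R] B) →ₗ[K ⊗[R] A] (K ⊗[R] A), φ (fB b) = 0 by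
      apply hKB
      rw [map_zero]
      ext φ
      simpa using hall φ
    intro φ
    -- generators of B over A
    obtain ⟨t, ht⟩ : (⊤ : Submodule A B).FG := hBfin.fg_top
    -- choose denominators for each generator
    have hsur : ∀ x : B, ∃ (a : A) (sd : S₀), (sd : R) • φ (fB x) = fA a := fun x => by
      obtain ⟨⟨a, sd⟩, h⟩ := IsLocalizedModule.surj S₀ fA (φ (fB x))
      exact ⟨a, sd, by simpa [Submonoid.smul_def] using h⟩
    choose num den hden using hsur
    set s : S₀ := ∏ x ∈ t, den x with hs
    -- smul computation lemma
    have hsm : ∀ (a' : A) (x : B), φ (fB (a' • x)) = ((1 : K) ⊗ₜ[R] a') * φ (fB x) := by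
      intro a' x
      have h1 : fB (a' • x) = ((1 : K) ⊗ₜ[R] a') • (fB x) := by
        rw [hsmul, hg, hfBdef]
        simp only [TensorProduct.mk_apply, Algebra.TensorProduct.map_tmul,
          Algebra.TensorProduct.tmul_mul_tmul, AlgHom.coe_id, id_eq, one_mul,
          IsScalarTower.coe_toAlgHom, IsScalarTower.coe_toAlgHom',
          ← algebraMap_smul B a' x, smul_eq_mul]
      rw [h1, map_smul, smul_eq_mul]
    -- R-smul computation
    have hrs : ∀ (r : R) (x : B), φ (fB (r • x)) = r • φ (fB x) := by
      intro r x
      have h1 : (algebraMap R (K ⊗[R] A) r) • (fB x) = r • fB x := by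
        rw [hsmul, g.commutes, ← Algebra.smul_def]
      rw [map_smul, ← h1, map_smul, algebraMap_smul]
    -- everything lands in range fA after multiplying by s
    have hrange : ∀ b' : B, (s : R) • φ (fB b') ∈ LinearMap.range fA := by
      intro b'
      have hb' : b' ∈ Submodule.span A (t : Set B) := by rw [ht]; trivial
      induction hb' using Submodule.span_induction with
      | mem x hx =>
        have hprod : (s : R) = (∏ y ∈ t.erase x, (den y : R)) * (den x : R) := by
          rw [hs]
          push_cast
          rw [Finset.prod_erase_mul _ _ hx]
        rw [hprod, mul_smul, hden x]
        exact ⟨(∏ y ∈ t.erase x, (den y : R)) • num x, by rw [map_smul]⟩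
      | zero => simp
      | add x y _ _ hx hy =>
        rw [map_add, map_add, smul_add]
        exact Submodule.add_mem _ hx hy
      | smul a' x _ hx =>
        obtain ⟨c, hc⟩ := hx
        refine ⟨a' * c, ?_⟩
        rw [hsm a' x, ← mul_smul_comm, ← hc, hfAdef]
        simp [Algebra.TensorProduct.tmul_mul_tmul]
    -- build the linear map Φ : B →ₗ[R] K ⊗ A
    let Φ : B →ₗ[R] K ⊗[R] A :=
      { toFun := fun b' => (s : R) • φ (fB b')
        map_add' := fun x y => by
          rw [map_add, map_add, smul_add]
        map_smul' := fun r x => by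
          dsimp only [RingHom.id_apply]
          rw [hrs, smul_comm] }
    have hΦr : ∀ b' : B, Φ b' ∈ LinearMap.range fA := hrange
    -- lift through fA
    let e := LinearEquiv.ofInjective fA hfA
    let ψ : B →ₗ[R] A :=
      e.symm.toLinearMap ∘ₗ Φ.codRestrict (LinearMap.range fA) hΦr
    have hψ : ∀ b' : B, fA (ψ b') = (s : R) • φ (fB b') := by
      intro b'
      have h1 : (e (ψ b') : K ⊗[R] A) = Φ b' := by
        show ((e (e.symm ⟨Φ b', hΦr b'⟩)) : K ⊗[R] A) = Φ b'
        rw [e.apply_symm_apply]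
      rwa [LinearEquiv.ofInjective_apply] at h1
    -- ψ b = 0 by semireflexivity of A
    have haz : ψ b = 0 := by
      apply hA
      rw [map_zero]
      ext gfun
      simpa using hb (gfun ∘ₗ ψ)
    have h4 : (s : R) • φ (fB b) = 0 := by rw [← hψ, haz, map_zero]
    exact hsreg s _ h4
  intro b₁ b₂ h
  rw [← sub_eq_zero]
  apply key
  rw [map_sub, h, sub_self]
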